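/- If G is NOT strongly (2f+1,Δ,T)-robust with respect to S, then the activation process (where a node activates upon having 2f+1 active neighbors, or three distinctly colored active neighbors, or a trusted active neighbor, starting from S active) never activates all nodes: there is a nonempty set P ⊆ V \ S none of whose elements is ever activated. -/
import Mathlib


open Finset
open scoped Classical

def threeColors {V Γ : Type*} (Δ : V → Γ) (F : Finset V) : Prop :=
  ∃ u ∈ F, ∃ v ∈ F, ∃ w ∈ F, Δ u ≠ Δ v ∧ Δ v ≠ Δ w ∧ Δ u ≠ Δ w

def reachable {V Γ : Type*} [DecidableEq V] (N : V → Finset V) (Δ : V → Γ)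
    (T : Finset V) (r : ℕ) (C : Finset V) : Prop :=
  ∃ i ∈ C, r ≤ ((N i) \ C).card ∨ threeColors Δ ((N i) \ C) ∨ ∃ t ∈ (N i) \ C, t ∈ T

def strongRobust {V Γ : Type*} [Fintype V] [DecidableEq V] (N : V → Finset V) (Δ : V → Γ)
    (T : Finset V) (r : ℕ) (S : Finset V) : Prop :=
  ∀ C : Finset V, C.Nonempty → C ⊆ Sᶜ → reachable N Δ T r C

noncomputable def step {V Γ : Type*} [Fintype V] [DecidableEq V]
    (N : V → Finset V) (Δ : V → Γ) (T : Finset V) (r : ℕ) (Act : Finset V) : Finset V :=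
  Act ∪ Finset.univ.filter (fun i =>
    r ≤ ((N i) ∩ Act).card ∨ threeColors Δ ((N i) ∩ Act) ∨ ∃ t ∈ (N i) ∩ Act, t ∈ T)

theorem stmt6 {V Γ : Type*} [Fintype V] [DecidableEq V]
    (N : V → Finset V) (Δ : V → Γ) (T : Finset V) (f : ℕ) (S : Finset V)
    (hnrob : ¬ strongRobust N Δ T (2 * f + 1) S) :
    ∃ P : Finset V, P.Nonempty ∧ P ⊆ Sᶜ ∧
      ∀ k : ℕ, ∀ i ∈ P, i ∉ (step N Δ T (2 * f + 1))^[k] S := by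
  simp only [strongRobust, not_forall] at hnrob
  obtain ⟨C, hne, hsub, hnr⟩ := hnrob
  refine ⟨C, hne, hsub, ?_⟩
  have key : ∀ k, ∀ i ∈ C, i ∉ (step N Δ T (2 * f + 1))^[k] S := by
    intro k
    induction k with
    | zero =>
      intro i hi hiS
      exact absurd (by simpa using hsub hi) (by simpa using hiS)
    | succ n ih =>
      intro i hi hiS
      rw [Function.iterate_succ_apply'] at hiS
      simp only [step, Finset.mem_union, Finset.mem_filter, Finset.mem_univ, true_and] at hiS
      have hAct : (N i ∩ (step N Δ T (2 * f + 1))^[n] S) ⊆ N i \ C := by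
        intro x hx
        rw [Finset.mem_inter] at hx
        rw [Finset.mem_sdiff]
        exact ⟨hx.1, fun hxC => ih x hxC hx.2⟩
      apply hnr
      refine ⟨i, hi, ?_⟩
      rcases hiS with h | h | h | h
      · exact absurd h (ih i hi)
      · exact Or.inl (le_trans h (Finset.card_le_card hAct))
      · refine Or.inr (Or.inl ?_)
        obtain ⟨u, hu, v, hv, w, hw, habc⟩ := h
        exact ⟨u, hAct hu, v, hAct hv, w, hAct hw, habc⟩
      · obtain ⟨t, ht, htT⟩ := h
        exact Or.inr (Or.inr ⟨t, hAct ht, htT⟩)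
  exact key
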